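/- Let A be an integral domain that is a finitely generated ℂ-algebra, x ∈ A a prime element, ν ≥ 1 an integer, g(Z) ∈ A[Z]∖A, g_i ∈ A[Z,Y₁,…,Y_i]∖A[Z,Y₁,…,Y_{i−1}] for 1 ≤ i ≤ ν−1, and ℓ₀,…,ℓ_{ν−1} positive integers. Let I be the ideal of the polynomial ring A[Z,Y₁,…,Y_ν] generated by x^{ℓ₀}Y₁ − g(Z) and x^{ℓ_i}Y_{i+1} − g_i(Z,Y₁,…,Y_i) for 1 ≤ i ≤ ν−1, and let B = A[Z,Y₁,…,Y_ν]/I, assumed to be an integral domain, with z, y₁, …, y_ν the residue classes of Z, Y₁, …, Y_ν. Suppose that B is a unique factorization domain, B is faithfully flat as an A-module, and A (identified with its image in B) is factorially closed in B. If z − a ∉ xB for every a ∈ A, and the image in B of ∂g_{ν−1}/∂Y_{ν−1} evaluated at (z, y₁, …, y_{ν−1}) does not lie in xB (with the convention that for ν = 1 this element is g'(z)), then B is not isomorphic as an A-algebra to the polynomial ring A[T]; i.e. the morphism Spec B → Spec A is not a trivial 𝔸¹-bundle. -/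

import Mathlib

open Polynomial in
private lemma stmt9_comp_zero {k : Type} [CommRing k] [IsDomain k]
    {F p : Polynomial k} (h : F.comp p = 0) (hp : p.natDegree ≠ 0) : F = 0 := by
  rcases Polynomial.comp_eq_zero_iff.mp h with h' | ⟨-, h'⟩
  · exact h'
  · exact absurd (by rw [h']; exact Polynomial.natDegree_C _) hp

theorem stmt9
    (A : Type) [CommRing A] [IsDomain A] [Algebra ℂ A] [Algebra.FiniteType ℂ A]
    (x : A) (hx : Prime x)
    (ν : ℕ) (hν : 1 ≤ ν)
    (gs : Fin ν → MvPolynomial (Fin (ν + 1)) A)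
    (hgs : ∀ i : Fin ν,
      gs i ∈ MvPolynomial.supported A {j : Fin (ν + 1) | (j : ℕ) ≤ (i : ℕ)} ∧
      gs i ∉ MvPolynomial.supported A {j : Fin (ν + 1) | (j : ℕ) < (i : ℕ)})
    (ℓ : Fin ν → ℕ) (hℓ : ∀ i, 0 < ℓ i)
    (B : Type) [CommRing B] [IsDomain B] [Algebra A B] [UniqueFactorizationMonoid B]
    (π : MvPolynomial (Fin (ν + 1)) A →ₐ[A] B)
    (hπsurj : Function.Surjective π)
    (hπker : RingHom.ker π = Ideal.span (Set.range fun i : Fin ν =>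
      (MvPolynomial.C x) ^ ℓ i * MvPolynomial.X i.succ - gs i))
    (hflat : Module.FaithfullyFlat A B)
    (hfactclosed : ∀ b₁ b₂ : B, b₁ * b₂ ∈ (algebraMap A B).range → b₁ * b₂ ≠ 0 →
      b₁ ∈ (algebraMap A B).range ∧ b₂ ∈ (algebraMap A B).range)
    (hza : ∀ a : A,
      π (MvPolynomial.X 0) - algebraMap A B a ∉ Ideal.span {algebraMap A B x})
    (hder : π (MvPolynomial.pderiv (⟨ν - 1, by omega⟩ : Fin (ν + 1))
          (gs ⟨ν - 1, by omega⟩))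
        ∉ Ideal.span {algebraMap A B x}) :
    ¬ Nonempty (B ≃ₐ[A] Polynomial A) := by
  rintro ⟨φ⟩
  classical
  set z : B := π (MvPolynomial.X 0) with hzdef
  -- the image of x in B is nonzero
  have hCx : ∀ a : A, algebraMap A (Polynomial A) a = Polynomial.C a := fun a => rfl
  have hxB : algebraMap A B x ≠ 0 := by
    intro h
    have h2 := congrArg φ h
    rw [map_zero, AlgEquiv.commutes, hCx] at h2
    exact hx.ne_zero (Polynomial.C_eq_zero.mp h2)
  -- the prime ideal (x) and the quotient
  have hIprime : (Ideal.span {x} : Ideal A).IsPrime :=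
    (Ideal.span_singleton_prime hx.ne_zero).mpr hx
  -- Key lemma: if F(z) ∈ xB then all coefficients of F are divisible by x
  have key3 : ∀ F : Polynomial A, Polynomial.aeval z F ∈ Ideal.span {algebraMap A B x} →
      F ∈ Ideal.span {Polynomial.C x} := by
    intro F hF
    set I : Ideal A := Ideal.span {x} with hI
    haveI : I.IsPrime := hIprime
    set mk : A →+* A ⧸ I := Ideal.Quotient.mk I with hmk
    set p : Polynomial A := φ z with hp
    have hmkx : mk x = 0 := Ideal.Quotient.eq_zero_iff_mem.mpr (Ideal.mem_span_singleton_self x)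
    -- map-to-quotient membership criterion
    have hmemC : ∀ G : Polynomial A, G.map mk = 0 → G ∈ Ideal.span {Polynomial.C x} := by
      intro G hG
      have : G ∈ Ideal.map (Polynomial.C : A →+* Polynomial A) I := by
        rw [Ideal.mem_map_C_iff]
        intro n
        have := congrArg (fun q => Polynomial.coeff q n) hG
        simp only [Polynomial.coeff_map, Polynomial.coeff_zero] at this
        exact Ideal.Quotient.eq_zero_iff_mem.mp this
      rwa [hI, Ideal.map_span, Set.image_singleton] at this
    -- φ (F(z)) = F.comp p
    have hcomp : ∀ G : Polynomial A, φ (Polynomial.aeval z G) = G.comp p := by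
      intro G
      rw [← Polynomial.aeval_algHom_apply φ z G, Polynomial.comp_eq_aeval]
    obtain ⟨c, hc⟩ := Ideal.mem_span_singleton.mp hF
    have h1 : F.comp p = Polynomial.C x * φ c := by
      rw [← hcomp, hc, map_mul, AlgEquiv.commutes, hCx]
    have h2 : (F.map mk).comp (p.map mk) = 0 := by
      rw [← Polynomial.map_comp, h1, Polynomial.map_mul, Polynomial.map_C, hmkx,
        Polynomial.C_0, zero_mul]
    -- p mod x is nonconstant
    have hpdeg : (p.map mk).natDegree ≠ 0 := by
      intro hd
      have hpc : p.map mk = Polynomial.C (mk (p.coeff 0)) := by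
        rw [Polynomial.eq_C_of_natDegree_eq_zero hd, Polynomial.coeff_map]
      have hzero : (p - Polynomial.C (p.coeff 0)).map mk = 0 := by
        rw [Polynomial.map_sub, Polynomial.map_C, hpc, sub_self]
      obtain ⟨r, hr⟩ := Ideal.mem_span_singleton.mp (hmemC _ hzero)
      apply hza (p.coeff 0)
      rw [Ideal.mem_span_singleton]
      refine ⟨φ.symm r, ?_⟩
      have : z - algebraMap A B (p.coeff 0) = φ.symm (p - Polynomial.C (p.coeff 0)) := by
        rw [map_sub, AlgEquiv.symm_apply_apply, ← hCx, AlgEquiv.commutes]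
      rw [this, hr, map_mul, ← hCx, AlgEquiv.commutes]
    have hF0 : F.map mk = 0 := stmt9_comp_zero h2 hpdeg
    exact hmemC F hF0
  -- dividing by powers of x
  have keyW : ∀ (m : ℕ) (b : B) (F : Polynomial A),
      (algebraMap A B x) ^ m * b = Polynomial.aeval z F →
      b ∈ (Polynomial.aeval z : Polynomial A →ₐ[A] B).range := by
    intro m
    induction m with
    | zero =>
      intro b F h
      exact ⟨F, by simpa using h.symm⟩
    | succ m ih =>
      intro b F h
      have hFx : Polynomial.aeval z F ∈ Ideal.span {algebraMap A B x} := by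
        rw [← h]
        exact Ideal.mem_span_singleton.mpr ⟨algebraMap A B x ^ m * b, by ring⟩
      obtain ⟨G, hG⟩ := Ideal.mem_span_singleton.mp (key3 F hFx)
      apply ih b G
      apply mul_left_cancel₀ hxB
      calc algebraMap A B x * ((algebraMap A B x) ^ m * b)
          = (algebraMap A B x) ^ (m + 1) * b := by ring
        _ = Polynomial.aeval z F := h
        _ = algebraMap A B x * Polynomial.aeval z G := by
            rw [hG, map_mul, Polynomial.aeval_C]
  -- π (C a) = algebraMap a
  have hπC : ∀ a : A, π (MvPolynomial.C a) = algebraMap A B a := fun a => by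
    rw [← MvPolynomial.algebraMap_eq]; exact π.commutes a
  -- generators are in the kernel
  have hgen : ∀ i : Fin ν,
      (algebraMap A B x) ^ ℓ i * π (MvPolynomial.X i.succ) = π (gs i) := by
    intro i
    have h0 : π ((MvPolynomial.C x) ^ ℓ i * MvPolynomial.X i.succ - gs i) = 0 := by
      rw [← RingHom.mem_ker, hπker]
      exact Ideal.subset_span ⟨i, rfl⟩
    rw [map_sub, sub_eq_zero, map_mul, map_pow, hπC] at h0
    exact h0
  -- every variable maps into A[z]
  have hQmem : ∀ (n : ℕ) (i : Fin (ν + 1)), (i : ℕ) ≤ n →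
      π (MvPolynomial.X i) ∈ (Polynomial.aeval z : Polynomial A →ₐ[A] B).range := by
    intro n
    induction n with
    | zero =>
      intro i hi
      have : i = 0 := Fin.ext (by simp only [Fin.val_zero]; omega)
      rw [this]
      exact ⟨Polynomial.X, by simp [hzdef]⟩
    | succ n ih =>
      intro i hi
      rcases Nat.lt_or_ge (i : ℕ) (n + 1) with h | h
      · exact ih i (by omega)
      · have hiν : (i : ℕ) < ν + 1 := i.isLt
        have hn : n < ν := by omega
        set j : Fin ν := ⟨n, hn⟩ with hj
        have hij : i = j.succ := Fin.ext (by simp [hj]; omega)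
        have hg_mem : π (gs j) ∈ (Polynomial.aeval z : Polynomial A →ₐ[A] B).range := by
          have h1 : gs j ∈ Algebra.adjoin A
              (MvPolynomial.X '' {j' : Fin (ν + 1) | (j' : ℕ) ≤ (j : ℕ)}) := by
            rw [← MvPolynomial.supported_eq_adjoin_X]
            exact (hgs j).1
          have h2 : π (gs j) ∈ Subalgebra.map π (Algebra.adjoin A
              (MvPolynomial.X '' {j' : Fin (ν + 1) | (j' : ℕ) ≤ (j : ℕ)})) :=
            ⟨gs j, h1, rfl⟩
          rw [AlgHom.map_adjoin] at h2
          refine Algebra.adjoin_le ?_ h2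
          rintro _ ⟨_, ⟨j', hj', rfl⟩, rfl⟩
          exact ih j' (by simpa [hj] using hj')
        obtain ⟨F, hF⟩ := hg_mem
        rw [hij]
        exact keyW (ℓ j) _ F (by rw [hgen j, ← hF]; rfl)
  choose Q hQspec' using fun i : Fin (ν + 1) =>
    hQmem ν i (Nat.lt_succ_iff.mp i.isLt)
  have hQspec : ∀ i : Fin (ν + 1), Polynomial.aeval z (Q i) = π (MvPolynomial.X i) :=
    fun i => hQspec' i
  -- the substitution map ψ with π = aeval z ∘ ψ
  set ψ : MvPolynomial (Fin (ν + 1)) A →ₐ[A] Polynomial A := MvPolynomial.aeval Q with hψdef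
  have hπψ : ∀ f, π f = Polynomial.aeval z (ψ f) := by
    have : π = (Polynomial.aeval z : Polynomial A →ₐ[A] B).comp ψ := by
      apply MvPolynomial.algHom_ext
      intro i
      simp only [AlgHom.comp_apply, hψdef, MvPolynomial.aeval_X]
      exact (hQspec i).symm
    intro f
    rw [this]
    rfl
  -- the main claim: ψ ∘ ∂/∂X_ν maps ker π into (x)
  have hmain : ∀ f, f ∈ RingHom.ker π →
      ψ (MvPolynomial.pderiv (Fin.last ν) f) ∈ Ideal.span {Polynomial.C x} ∧
      ψ f ∈ Ideal.span {Polynomial.C x} := by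
    intro f hf
    rw [hπker] at hf
    induction hf using Submodule.span_induction with
    | mem w hw =>
      obtain ⟨i, rfl⟩ := hw
      have hnotvar : Fin.last ν ∉ (gs i).vars := by
        intro hmem
        have := MvPolynomial.mem_supported.mp (hgs i).1 hmem
        simp only [Set.mem_setOf_eq, Fin.val_last] at this
        omega
      have hpd0 : MvPolynomial.pderiv (Fin.last ν) (gs i) = 0 :=
        MvPolynomial.pderiv_eq_zero_of_notMem_vars hnotvar
      have hpdC : MvPolynomial.pderiv (Fin.last ν)
          ((MvPolynomial.C x : MvPolynomial (Fin (ν + 1)) A) ^ ℓ i) = 0 := by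
        rw [← map_pow, MvPolynomial.pderiv_C]
      constructor
      · rw [map_sub, hpd0, sub_zero, MvPolynomial.pderiv_mul, hpdC, zero_mul, zero_add]
        rw [map_mul, map_pow]
        have hψC : ψ (MvPolynomial.C x) = Polynomial.C x := by
          rw [← MvPolynomial.algebraMap_eq, AlgHom.commutes, hCx]
        rw [hψC]
        rw [Ideal.mem_span_singleton]
        exact Dvd.dvd.mul_right (dvd_pow_self _ (hℓ i).ne') _
      · rw [map_sub]
        apply Ideal.sub_mem
        · rw [map_mul, map_pow]
          have hψC : ψ (MvPolynomial.C x) = Polynomial.C x := by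
            rw [← MvPolynomial.algebraMap_eq, AlgHom.commutes, hCx]
          rw [hψC, Ideal.mem_span_singleton]
          exact Dvd.dvd.mul_right (dvd_pow_self _ (hℓ i).ne') _
        · apply key3
          rw [← hπψ, ← hgen i, Ideal.mem_span_singleton]
          exact Dvd.dvd.mul_right (dvd_pow_self _ (hℓ i).ne') _
    | zero => simp
    | add u v hu hv ihu ihv =>
      constructor
      · rw [map_add, map_add]
        exact Ideal.add_mem _ ihu.1 ihv.1
      · rw [map_add]
        exact Ideal.add_mem _ ihu.2 ihv.2
    | smul a w hw ihw =>
      rw [smul_eq_mul]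
      constructor
      · rw [MvPolynomial.pderiv_mul, map_add, map_mul, map_mul]
        apply Ideal.add_mem
        · exact Ideal.mul_mem_left _ _ ihw.2
        · exact Ideal.mul_mem_left _ _ ihw.1
      · rw [map_mul]
        exact Ideal.mul_mem_left _ _ ihw.2
  -- the witness element
  set f₀ : MvPolynomial (Fin (ν + 1)) A :=
    MvPolynomial.X (Fin.last ν) -
      Polynomial.aeval (MvPolynomial.X 0) (Q (Fin.last ν)) with hf₀def
  have hf₀ker : f₀ ∈ RingHom.ker π := by
    rw [RingHom.mem_ker, hf₀def, map_sub,
      ← Polynomial.aeval_algHom_apply π (MvPolynomial.X 0) (Q (Fin.last ν))]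
    rw [← hzdef, hQspec (Fin.last ν), sub_self]
  have hlast0 : (Fin.last ν) ≠ (0 : Fin (ν + 1)) := by
    intro h
    have := congrArg (fun t : Fin (ν + 1) => (t : ℕ)) h
    simp at this
    omega
  have hvars : Fin.last ν ∉
      (Polynomial.aeval (MvPolynomial.X 0 : MvPolynomial (Fin (ν + 1)) A)
        (Q (Fin.last ν))).vars := by
    intro hmem
    have hsupp : Polynomial.aeval (MvPolynomial.X 0 : MvPolynomial (Fin (ν + 1)) A)
        (Q (Fin.last ν)) ∈ MvPolynomial.supported A ({0} : Set (Fin (ν + 1))) := by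
      rw [MvPolynomial.supported_eq_adjoin_X, Set.image_singleton]
      exact Polynomial.aeval_mem_adjoin_singleton A _
    have := MvPolynomial.mem_supported.mp hsupp hmem
    simp only [Set.mem_singleton_iff] at this
    exact hlast0 this
  have hpdf₀ : MvPolynomial.pderiv (Fin.last ν) f₀ = 1 := by
    rw [hf₀def, map_sub, MvPolynomial.pderiv_eq_zero_of_notMem_vars hvars, sub_zero,
      MvPolynomial.pderiv_X_self]
  have hone : (1 : Polynomial A) ∈ Ideal.span {Polynomial.C x} := by
    have := (hmain f₀ hf₀ker).1
    rwa [hpdf₀, map_one] at this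
  obtain ⟨r, hr⟩ := Ideal.mem_span_singleton.mp hone
  exact hx.not_isUnit (Polynomial.isUnit_C.mp (IsUnit.of_mul_eq_one _ hr.symm))
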